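/- Let H, G be groups with action φ: G → Aut(H), and define V₁ = H, 𝐻̃_n = ⟨φ(g)(h)h⁻¹ : g ∈ G, h ∈ V_{n−1}⟩, V_n = ⟨𝐻̃_n, [H, V_{n−1}]⟩ for n ≥ 2. Then for all n ≥ 1, the derived series term satisfies (H ⋊_φ G)^{(n−1)} ⊆ V_n ⋊_φ G^{(n−1)}. -/

import Mathlib

/-- The subgroups `V_n` of `H` from Theorem 1.2 of the paper (zero-based indexing, so
`Vseries φ (n-1)` is the paper's `V_n`): `V₁ = H` and
`V_{n+1} = ⟨H̃_{n+1}, [H, V_n]⟩` where `H̃_{n+1} = ⟨φ(g)(h)h⁻¹ : g ∈ G, h ∈ V_n⟩`. -/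
def Vseries {G H : Type*} [Group G] [Group H] (φ : G →* MulAut H) : ℕ → Subgroup H
  | 0 => ⊤
  | n + 1 =>
      Subgroup.closure {x : H | ∃ g : G, ∃ h ∈ Vseries φ n, x = φ g h * h⁻¹} ⊔
      ⁅(⊤ : Subgroup H), Vseries φ n⁆

open scoped commutatorElement

section Aux

variable {G H : Type*} [Group G] [Group H] (φ : G →* MulAut H)

lemma mem_Vsucc_phi {n : ℕ} (g : G) {h : H} (hh : h ∈ Vseries φ n) :
    φ g h * h⁻¹ ∈ Vseries φ (n + 1) :=
  Subgroup.mem_sup_left (Subgroup.subset_closure ⟨g, h, hh, rfl⟩)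

lemma mem_Vsucc_comm {n : ℕ} (a : H) {h : H} (hh : h ∈ Vseries φ n) :
    ⁅a, h⁆ ∈ Vseries φ (n + 1) :=
  Subgroup.mem_sup_right (Subgroup.commutator_mem_commutator (Subgroup.mem_top a) hh)

lemma Vseries_succ_le : ∀ n : ℕ, Vseries φ (n + 1) ≤ Vseries φ n := by
  intro n
  induction n with
  | zero => exact le_top
  | succ n ih =>
    show Subgroup.closure _ ⊔ ⁅(⊤ : Subgroup H), Vseries φ (n+1)⁆ ≤ Vseries φ (n+1)
    apply sup_le
    · rw [Subgroup.closure_le]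
      rintro x ⟨g, h, hh, rfl⟩
      exact mem_Vsucc_phi φ g (ih hh)
    · refine le_trans (Subgroup.commutator_mono le_rfl ih) ?_
      exact le_trans le_sup_right le_rfl

lemma phi_mem_Vseries {n : ℕ} (g : G) {v : H} (hv : v ∈ Vseries φ n) :
    φ g v ∈ Vseries φ n := by
  have : φ g v = (φ g v * v⁻¹) * v := by group
  rw [this]
  exact mul_mem (Vseries_succ_le φ n (mem_Vsucc_phi φ g hv)) hv

lemma conj_mem_Vseries {n : ℕ} (a : H) {v : H} (hv : v ∈ Vseries φ n) :
    a * v * a⁻¹ ∈ Vseries φ n := by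
  have : a * v * a⁻¹ = ⁅a, v⁆ * v := by group
  rw [this]
  exact mul_mem (Vseries_succ_le φ n (mem_Vsucc_comm φ a hv)) hv

lemma conj_inl (z : H ⋊[φ] G) (v : H) :
    z * SemidirectProduct.inl v * z⁻¹ =
      SemidirectProduct.inl (z.left * φ z.right v * z.left⁻¹) := by
  ext <;> simp [mul_assoc]

lemma map_inl_normal (n : ℕ) :
    ((Vseries φ n).map (SemidirectProduct.inl : H →* H ⋊[φ] G)).Normal := by
  constructor
  rintro x ⟨v, hv, rfl⟩ z
  rw [conj_inl]
  exact ⟨_, conj_mem_Vseries φ z.left (phi_mem_Vseries φ z.right hv), rfl⟩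

lemma comm_left_of_central {Q : Type*} [Group Q] (a b y : Q)
    (ha : ∀ z, Commute a z) : ⁅a * b, y⁆ = ⁅b, y⁆ := by
  rw [commutatorElement_def, commutatorElement_def, mul_inv_rev]
  have h := (ha (b * y * b⁻¹)).eq
  calc a * b * y * (b⁻¹ * a⁻¹) * y⁻¹ = a * (b * y * b⁻¹) * (a⁻¹ * y⁻¹) := by group
    _ = (b * y * b⁻¹) * a * (a⁻¹ * y⁻¹) := by rw [h]
    _ = b * y * b⁻¹ * y⁻¹ := by group

lemma comm_right_of_central {Q : Type*} [Group Q] (x c d : Q)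
    (hc : ∀ z, Commute c z) : ⁅x, c * d⁆ = ⁅x, d⁆ := by
  rw [← commutatorElement_inv (c * d) x, comm_left_of_central c d x hc,
    commutatorElement_inv]

end Aux

/-- Theorem 1.2(2): `(H ⋊_φ G)^{(n-1)} ⊆ V_n ⋊_φ G^{(n-1)}` for all `n ≥ 1`
(zero-based: `derivedSeries _ m` is the paper's `(·)^{(m)}` and `Vseries φ m` is the
paper's `V_{m+1}`). -/
theorem derivedSeries_semidirectProduct_le {G H : Type*} [Group G] [Group H]
    (φ : G →* MulAut H) :
    ∀ n : ℕ,
      derivedSeries (H ⋊[φ] G) n ≤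
        (Vseries φ n).map SemidirectProduct.inl ⊔
          (derivedSeries G n).map SemidirectProduct.inr := by
  intro n
  induction n with
  | zero =>
    intro x _
    rw [← SemidirectProduct.inl_left_mul_inr_right x]
    exact mul_mem (Subgroup.mem_sup_left ⟨x.left, trivial, rfl⟩)
      (Subgroup.mem_sup_right ⟨x.right, Subgroup.mem_top _, rfl⟩)
  | succ n ih =>
    rw [derivedSeries_succ]
    haveI hM : ((Vseries φ (n+1)).map
        (SemidirectProduct.inl : H →* H ⋊[φ] G)).Normal := map_inl_normal φ (n+1)
    haveI hN : ((Vseries φ n).map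
        (SemidirectProduct.inl : H →* H ⋊[φ] G)).Normal := map_inl_normal φ n
    refine le_trans (Subgroup.commutator_mono ih ih) ?_
    rw [Subgroup.commutator_le]
    -- decompose members of the sup
    have decomp : ∀ x ∈ (Vseries φ n).map (SemidirectProduct.inl : H →* H ⋊[φ] G) ⊔
        (derivedSeries G n).map SemidirectProduct.inr,
        ∃ v ∈ Vseries φ n, ∃ g ∈ derivedSeries G n,
          x = SemidirectProduct.inl v * SemidirectProduct.inr g := by
      intro x hx
      have : x ∈ ((↑((Vseries φ n).map (SemidirectProduct.inl : H →* H ⋊[φ] G) ⊔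
          (derivedSeries G n).map SemidirectProduct.inr)) : Set (H ⋊[φ] G)) := hx
      rw [Subgroup.normal_mul] at this
      obtain ⟨a, ⟨v, hv, rfl⟩, b, ⟨g, hg, rfl⟩, rfl⟩ := this
      exact ⟨v, hv, g, hg, rfl⟩
    intro x hx y hy
    obtain ⟨v₁, hv₁, g₁, hg₁, rfl⟩ := decomp x hx
    obtain ⟨v₂, hv₂, g₂, hg₂, rfl⟩ := decomp y hy
    set M := (Vseries φ (n+1)).map (SemidirectProduct.inl : H →* H ⋊[φ] G)
    let mk : H ⋊[φ] G →* (H ⋊[φ] G) ⧸ M := QuotientGroup.mk' M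
    have central : ∀ h ∈ Vseries φ n, ∀ z : H ⋊[φ] G,
        Commute (mk (SemidirectProduct.inl h)) (mk z) := by
      intro h hh z
      rw [← SemidirectProduct.inl_left_mul_inr_right z, map_mul]
      apply Commute.mul_right
      · rw [← commutatorElement_eq_one_iff_commute, ← map_commutatorElement,
          ← map_commutatorElement]
        refine (QuotientGroup.eq_one_iff _).mpr ?_
        refine ⟨⁅h, z.left⁆, ?_, rfl⟩
        rw [← commutatorElement_inv]
        exact inv_mem (mem_Vsucc_comm φ z.left hh)
      · rw [← commutatorElement_eq_one_iff_commute, ← map_commutatorElement]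
        have : ⁅(SemidirectProduct.inl h : H ⋊[φ] G), (SemidirectProduct.inr z.right : H ⋊[φ] G)⁆ =
            SemidirectProduct.inl (h * (φ z.right h⁻¹ * (h⁻¹)⁻¹) * h⁻¹) := by
          ext <;> simp [commutatorElement_def, mul_assoc]
        rw [this]
        refine (QuotientGroup.eq_one_iff _).mpr ?_
        exact ⟨_, conj_mem_Vseries φ h (mem_Vsucc_phi φ z.right (inv_mem hh)), rfl⟩
    have central' : ∀ h ∈ Vseries φ n, ∀ q : (H ⋊[φ] G) ⧸ M,
        Commute (mk (SemidirectProduct.inl h)) q := fun h hh q =>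
      QuotientGroup.induction_on q (fun z => central h hh z)
    have key : mk ⁅(SemidirectProduct.inl v₁ * SemidirectProduct.inr g₁ : H ⋊[φ] G),
        (SemidirectProduct.inl v₂ * SemidirectProduct.inr g₂ : H ⋊[φ] G)⁆ =
        mk (SemidirectProduct.inr ⁅g₁, g₂⁆) := by
      rw [map_commutatorElement, map_mul, map_mul,
        comm_left_of_central _ _ _ (central' v₁ hv₁),
        comm_right_of_central _ _ _ (central' v₂ hv₂), ← map_commutatorElement mk,
        ← map_commutatorElement (SemidirectProduct.inr : G →* H ⋊[φ] G)]
    have h1 : mk ((⁅(SemidirectProduct.inl v₁ * SemidirectProduct.inr g₁ : H ⋊[φ] G),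
        (SemidirectProduct.inl v₂ * SemidirectProduct.inr g₂ : H ⋊[φ] G)⁆)⁻¹ *
        SemidirectProduct.inr ⁅g₁, g₂⁆) = 1 := by
      rw [map_mul, map_inv, key, inv_mul_cancel]
    obtain ⟨w, hw, hwe⟩ := (QuotientGroup.eq_one_iff _).mp h1
    have h2 : (⁅(SemidirectProduct.inl v₁ * SemidirectProduct.inr g₁ : H ⋊[φ] G),
        (SemidirectProduct.inl v₂ * SemidirectProduct.inr g₂ : H ⋊[φ] G)⁆) =
        SemidirectProduct.inr ⁅g₁, g₂⁆ * (SemidirectProduct.inl w)⁻¹ := by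
      rw [hwe]; group
    rw [h2]
    refine mul_mem (Subgroup.mem_sup_right ⟨⁅g₁, g₂⁆, ?_, rfl⟩)
      (Subgroup.mem_sup_left ⟨w⁻¹, inv_mem hw, by rw [map_inv]⟩)
    rw [derivedSeries_succ]
    exact Subgroup.commutator_mem_commutator hg₁ hg₂
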